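/- Let F be an infinite field and T a tensor of shape (n,m,k) over F with n ≤ m whose associated Kronecker-quiver representation is semistable. Then for every integer p with 1 ≤ p ≤ m/n, T restricts to the matrix multiplication tensor ⟨1, ⌈(m−(p−1)·n)·n/(n+m)⌉, p⟩. -/

import Mathlib

open scoped BigOperators
open Module

namespace Paper

variable (F : Type) [Field F]

/-- A 3-mode tensor of shape `(n,m,k)` over `F`, given by its coefficient array. -/
abbrev Tensor (n m k : ℕ) : Type := Fin n → Fin m → Fin k → F

variable {F}

/-- `Restricts S T` : the tensor `S` restricts to the tensor `T`, i.e. `T ≤ S`. -/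
def Restricts {n m k n' m' k' : ℕ} (S : Tensor F n m k) (T : Tensor F n' m' k') : Prop :=
  ∃ (A : Matrix (Fin n') (Fin n) F) (B : Matrix (Fin m') (Fin m) F)
    (C : Matrix (Fin k') (Fin k) F),
    ∀ i j l, T i j l = ∑ i', ∑ j', ∑ l', A i i' * B j j' * C l l' * S i' j' l'

/-- The matrix multiplication tensor `⟨E,H,L⟩`, of shape `(EH, HL, LE)`. -/
def MMT (E H L : ℕ) : Tensor F (E * H) (H * L) (L * E) := fun x y z =>
  if ((finProdFinEquiv.symm x : Fin E × Fin H).2 = (finProdFinEquiv.symm y : Fin H × Fin L).1)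
      ∧ ((finProdFinEquiv.symm y : Fin H × Fin L).2 = (finProdFinEquiv.symm z : Fin L × Fin E).1)
      ∧ ((finProdFinEquiv.symm z : Fin L × Fin E).2 = (finProdFinEquiv.symm x : Fin E × Fin H).1)
  then 1 else 0

/-- Tensor (Kronecker) product of two tensors. -/
def tmul {n m k n' m' k' : ℕ} (T : Tensor F n m k) (S : Tensor F n' m' k') :
    Tensor F (n * n') (m * m') (k * k') := fun i j l =>
  T (finProdFinEquiv.symm i : Fin n × Fin n').1 (finProdFinEquiv.symm j : Fin m × Fin m').1
      (finProdFinEquiv.symm l : Fin k × Fin k').1 *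
    S (finProdFinEquiv.symm i : Fin n × Fin n').2 (finProdFinEquiv.symm j : Fin m × Fin m').2
      (finProdFinEquiv.symm l : Fin k × Fin k').2

/-- Direct sum of two tensors. -/
def tdsum {n m k n' m' k' : ℕ} (T : Tensor F n m k) (S : Tensor F n' m' k') :
    Tensor F (n + n') (m + m') (k + k') := fun i j l =>
  if h : (i : ℕ) < n ∧ (j : ℕ) < m ∧ (l : ℕ) < k then
    T ⟨i, h.1⟩ ⟨j, h.2.1⟩ ⟨l, h.2.2⟩
  else if h' : n ≤ (i : ℕ) ∧ m ≤ (j : ℕ) ∧ k ≤ (l : ℕ) then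
    S ⟨(i : ℕ) - n, by have := i.isLt; omega⟩
      ⟨(j : ℕ) - m, by have := j.isLt; omega⟩
      ⟨(l : ℕ) - k, by have := l.isLt; omega⟩
  else 0

/-- Cast a tensor along equalities of its dimensions. -/
def tcast {n m k n' m' k' : ℕ} (hn : n = n') (hm : m = m') (hk : k = k')
    (T : Tensor F n m k) : Tensor F n' m' k' := fun i j l =>
  T (Fin.cast hn.symm i) (Fin.cast hm.symm j) (Fin.cast hk.symm l)

/-- The `N`-th tensor (Kronecker) power of a tensor. -/
def tpow {n m k : ℕ} (T : Tensor F n m k) : (N : ℕ) → Tensor F (n ^ N) (m ^ N) (k ^ N)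
  | 0 => fun _ _ _ => 1
  | N + 1 => tcast (pow_succ n N).symm (pow_succ m N).symm (pow_succ k N).symm
      (tmul (tpow T N) T)

/-- A spectral point over `F`: a normalized, additive, multiplicative functional on tensors
of every shape, monotone under restriction. -/
structure SpectralPoint (F : Type) [Field F] where
  val : ∀ {n m k : ℕ}, Tensor F n m k → ℝ
  nonneg : ∀ {n m k : ℕ} (T : Tensor F n m k), 0 ≤ val T
  normalized : val (MMT (F := F) 1 1 1) = 1
  additive : ∀ {n m k n' m' k' : ℕ} (T : Tensor F n m k) (S : Tensor F n' m' k'),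
    val (tdsum T S) = val T + val S
  multiplicative : ∀ {n m k n' m' k' : ℕ} (T : Tensor F n m k) (S : Tensor F n' m' k'),
    val (tmul T S) = val T * val S
  monotone : ∀ {n m k n' m' k' : ℕ} (S : Tensor F n m k) (T : Tensor F n' m' k'),
    Restricts S T → val T ≤ val S

/-- Base-2 Shannon entropy of a finitely supported distribution. -/
noncomputable def entropy {ι : Type*} [Fintype ι] (Q : ι → ℝ) : ℝ :=
  ∑ x, -(Q x * Real.logb 2 (Q x))

/-- Action of a triple of matrices on a tensor by change of basis. -/
def gAction {n m k : ℕ} (g1 : Matrix (Fin n) (Fin n) F) (g2 : Matrix (Fin m) (Fin m) F)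
    (g3 : Matrix (Fin k) (Fin k) F) (T : Tensor F n m k) : Tensor F n m k := fun i j l =>
  ∑ i', ∑ j', ∑ l', g1 i i' * g2 j j' * g3 l l' * T i' j' l'

/-- Strassen's upper support functional `ζ^θ`. -/
noncomputable def zeta {n m k : ℕ} (θ1 θ2 θ3 : ℝ) (T : Tensor F n m k) : ℝ :=
  sInf { v : ℝ |
    ∃ (g1 : Matrix (Fin n) (Fin n) F) (g2 : Matrix (Fin m) (Fin m) F)
      (g3 : Matrix (Fin k) (Fin k) F), IsUnit g1 ∧ IsUnit g2 ∧ IsUnit g3 ∧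
      v = sSup { e : ℝ | ∃ P : Fin n × Fin m × Fin k → ℝ,
        (∀ x, 0 ≤ P x) ∧ (∑ x, P x) = 1 ∧
        (∀ x, P x ≠ 0 → gAction g1 g2 g3 T x.1 x.2.1 x.2.2 ≠ 0) ∧
        e = (2 : ℝ) ^ (θ1 * entropy (fun i => ∑ j, ∑ l, P (i, j, l))
            + θ2 * entropy (fun j => ∑ i, ∑ l, P (i, j, l))
            + θ3 * entropy (fun l => ∑ i, ∑ j, P (i, j, l))) } }

/-- The lower value functional `ξ_γ`. -/
noncomputable def xi {n m k : ℕ} (γ1 γ2 γ3 : ℝ) (T : Tensor F n m k) : ℝ :=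
  sSup { x : ℝ | ∃ N E H L : ℕ, 1 ≤ N ∧ 1 ≤ E ∧ 1 ≤ H ∧ 1 ≤ L ∧
    Restricts (tpow T N) (MMT E H L) ∧
    x = ((E : ℝ) ^ γ1 * (H : ℝ) ^ γ2 * (L : ℝ) ^ γ3) ^ (1 / (N : ℝ)) }

/-- Semistability of a Kronecker-quiver representation `f : ι → U →ₗ[F] V`:
every nonzero subrepresentation `(U',V')` has slope `dim U'/dim V'` at most `dim U/dim V`
(stated in cross-multiplied form, with the convention `μ* = ∞` when `dim V' = 0`). -/
def Semistable (F : Type*) [Field F] {ι U V : Type*} [AddCommGroup U] [Module F U]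
    [AddCommGroup V] [Module F V] (f : ι → U →ₗ[F] V) : Prop :=
  ∀ (U' : Submodule F U) (V' : Submodule F V),
    (∀ l, U'.map (f l) ≤ V') → ¬(U' = ⊥ ∧ V' = ⊥) →
    finrank F U' * finrank F V ≤ finrank F U * finrank F V'

/-- The Kronecker-quiver representation associated to a tensor `T`:
`f_l` sends the `i`-th basis vector of `F^n` to `∑ j, T i j l • (basis of F^m)`. -/
def tensorRepMap {F : Type} [Field F] {n m k : ℕ} (T : Tensor F n m k) (l : Fin k) :
    (Fin n → F) →ₗ[F] (Fin m → F) :=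
  Matrix.mulVecLin (Matrix.of fun j i => T i j l)

/-- `IsHNFiltration F f Uc Vc` : the chain `(Uc u, Vc u)` is a Harder–Narasimhan filtration of
the Kronecker-quiver representation `f`, i.e. a strictly increasing chain of subrepresentations
from `(⊥,⊥)` to `(⊤,⊤)` with semistable subquotients and strictly decreasing subquotient slopes
(all slope comparisons stated in cross-multiplied form). -/
structure IsHNFiltration (F : Type*) [Field F] {ι U V : Type*} [AddCommGroup U] [Module F U]
    [AddCommGroup V] [Module F V] (f : ι → U →ₗ[F] V) {r : ℕ}
    (Uc : Fin (r + 1) → Submodule F U) (Vc : Fin (r + 1) → Submodule F V) : Prop where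
  bot_U : Uc 0 = ⊥
  bot_V : Vc 0 = ⊥
  top_U : Uc (Fin.last r) = ⊤
  top_V : Vc (Fin.last r) = ⊤
  mono_U : ∀ u : Fin r, Uc u.castSucc ≤ Uc u.succ
  mono_V : ∀ u : Fin r, Vc u.castSucc ≤ Vc u.succ
  proper : ∀ u : Fin r, Uc u.castSucc ≠ Uc u.succ ∨ Vc u.castSucc ≠ Vc u.succ
  subrep : ∀ (u : Fin (r + 1)) (l : ι), (Uc u).map (f l) ≤ Vc u
  semistable_quot : ∀ u : Fin r, ∀ (U' : Submodule F U) (V' : Submodule F V),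
    Uc u.castSucc ≤ U' → U' ≤ Uc u.succ → Vc u.castSucc ≤ V' → V' ≤ Vc u.succ →
    (∀ l, U'.map (f l) ≤ V') → ¬(U' = Uc u.castSucc ∧ V' = Vc u.castSucc) →
    (finrank F U' - finrank F (Uc u.castSucc)) *
        (finrank F (Vc u.succ) - finrank F (Vc u.castSucc))
      ≤ (finrank F (Uc u.succ) - finrank F (Uc u.castSucc)) *
        (finrank F V' - finrank F (Vc u.castSucc))
  slope_anti : ∀ u v : Fin r, (u : ℕ) + 1 = (v : ℕ) →
    (finrank F (Uc v.succ) - finrank F (Uc v.castSucc)) *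
        (finrank F (Vc u.succ) - finrank F (Vc u.castSucc))
      < (finrank F (Uc u.succ) - finrank F (Uc u.castSucc)) *
        (finrank F (Vc v.succ) - finrank F (Vc v.castSucc))

/-- The dimension of the `u`-th subquotient of a filtration. -/
noncomputable def stepDim (F : Type*) [Field F] {U : Type*} [AddCommGroup U] [Module F U]
    {r : ℕ} (Uc : Fin (r + 1) → Submodule F U) (u : Fin r) : ℕ :=
  finrank F (Uc u.succ) - finrank F (Uc u.castSucc)

section AuxLemmas
open Polynomial

lemma lin_indep_perturb {F : Type} [Field F] {W : Type} [AddCommGroup W] [Module F W]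
    {r : ℕ} (a b : Fin r → W) (ha : LinearIndependent F a) :
    {t : F | ¬ LinearIndependent F (fun i => a i + t • b i)}.Finite := by
  obtain ⟨S', hcompl⟩ := (Submodule.span F (Set.range a)).exists_isCompl
  set S := Submodule.span F (Set.range a) with hS
  let π := S.linearProjOfIsCompl S' hcompl
  let bS : Basis (Fin r) F S := Basis.span ha
  let φ : Fin r → W →ₗ[F] F := fun i => (bS.coord i).comp π
  have hπ : ∀ j, π (a j) = bS j := by
    intro j
    have h1 : a j ∈ S := Submodule.subset_span (Set.mem_range_self j)
    have h2 : (⟨a j, h1⟩ : S) = bS j := by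
      ext; exact congrArg Subtype.val (Basis.span_apply ha j).symm
    calc π (a j) = ⟨a j, h1⟩ := Submodule.linearProjOfIsCompl_apply_left hcompl ⟨a j, h1⟩
    _ = bS j := h2
  have hφa : ∀ i j, φ i (a j) = if j = i then 1 else 0 := by
    intro i j
    simp only [φ, LinearMap.comp_apply, hπ, Basis.coord_apply, Basis.repr_self_apply]
  set N : Matrix (Fin r) (Fin r) F := Matrix.of fun i j => φ i (b j) with hN
  set q : F[X] := (1 + (X : F[X]) • N.map C).det with hq
  have hmapev : ∀ t : F, (1 + (X : F[X]) • N.map C).map (evalRingHom t) = 1 + t • N := by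
    intro t
    ext i j
    simp only [Matrix.map_apply, Matrix.add_apply, Matrix.smul_apply, smul_eq_mul,
      Matrix.one_apply, coe_evalRingHom, eval_add, eval_mul, eval_X, eval_C, apply_ite (eval t), eval_one, eval_zero]
  have hqeval : ∀ t : F, q.eval t = (1 + t • N).det := by
    intro t
    rw [hq, ← hmapev t]
    exact RingHom.map_det (evalRingHom t) _
  have hq0 : q.eval 0 = 1 := by
    rw [hqeval 0]; simp
  have hqne : q ≠ 0 := fun h => by simp [h] at hq0
  refine Set.Finite.subset (Polynomial.finite_setOf_isRoot hqne) ?_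
  intro t ht
  by_contra hroot
  apply ht
  have hdet : (1 + t • N).det ≠ 0 := by
    rw [← hqeval t]; exact hroot
  rw [Fintype.linearIndependent_iff]
  intro c hc
  set A : Matrix (Fin r) (Fin r) F := 1 + t • N with hA
  have hvec : A.mulVec c = 0 := by
    funext i
    have h1 : φ i (∑ j, c j • (a j + t • b j)) = 0 := by rw [hc]; simp
    rw [map_sum] at h1
    have h2 : ∀ j, φ i (c j • (a j + t • b j)) = c j * ((if j = i then 1 else 0) + t * N i j) := by
      intro j
      rw [map_smul, map_add, map_smul, hφa]
      simp [hN, smul_eq_mul]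
    simp only [h2] at h1
    have hAc : (A.mulVec c) i = ∑ j, ((if i = j then 1 else 0) + t * N i j) * c j := by
      simp [hA, Matrix.mulVec, dotProduct, Matrix.add_apply, Matrix.one_apply,
        Matrix.smul_apply, smul_eq_mul]
    have hsum : ∑ j, ((if i = j then 1 else 0) + t * N i j) * c j
        = ∑ j, c j * ((if j = i then 1 else 0) + t * N i j) := by
      refine Finset.sum_congr rfl (fun j _ => ?_)
      by_cases hji : j = i
      · subst hji; simp; ring
      · rw [if_neg hji, if_neg (fun h => hji h.symm)]; ring
    rw [Pi.zero_apply, hAc, hsum, h1]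
  intro i
  have hinv := Matrix.nonsing_inv_mul A (isUnit_iff_ne_zero.2 hdet)
  have : c = (A⁻¹ * A).mulVec c := by rw [hinv]; simp [Matrix.one_mulVec]
  rw [← Matrix.mulVec_mulVec, hvec] at this
  simp [Matrix.mulVec_zero] at this
  rw [this]
  simp

lemma pencil {F : Type} [Field F] [Infinite F] {W : Type} [AddCommGroup W] [Module F W]
    {V : Type} [AddCommGroup V] [Module F V]
    [FiniteDimensional F V] [FiniteDimensional F W]
    (g h : V →ₗ[F] W)
    (hrk : ∀ t : F, finrank F (LinearMap.range (g + t • h)) ≤ finrank F (LinearMap.range g))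
    {v : V} (hv : g v = 0) : h v ∈ LinearMap.range g := by
  by_contra hnot
  set Q := finrank F (LinearMap.range g) with hQ
  let bR : Basis (Fin Q) F (LinearMap.range g) := Module.finBasis F _
  have hmem : ∀ i, (bR i : W) ∈ LinearMap.range g := fun i => (bR i).2
  choose u hu using fun i => hmem i
  have hgu : (fun i => g (u i)) = fun i => ((bR i : W)) := funext fun i => hu i
  have hspan : Submodule.span F (Set.range fun i => g (u i)) = LinearMap.range g := by
    rw [hgu]
    have : (Set.range fun i => ((bR i : W))) = (LinearMap.range g).subtype '' (Set.range bR) := by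
      ext x; simp
    rw [this, ← Submodule.map_span, bR.span_eq, Submodule.map_top, Submodule.range_subtype]
  set a : Fin (Q + 1) → W := Fin.snoc (fun i => g (u i)) (h v) with ha
  set bb : Fin (Q + 1) → W := Fin.snoc (fun i => h (u i)) (0 : W) with hbb
  have haLI : LinearIndependent F a := by
    rw [ha, linearIndependent_fin_snoc]
    constructor
    · rw [hgu]
      exact bR.linearIndependent.map' (LinearMap.range g).subtype
        (Submodule.ker_subtype _)
    · rw [hspan]; exact hnot
  have hfin := lin_indep_perturb a bb haLI
  obtain ⟨t, ht⟩ := ((hfin.union (Set.finite_singleton (0 : F))).infinite_compl).nonempty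
  simp only [Set.mem_compl_iff, Set.mem_union, Set.mem_singleton_iff, not_or] at ht
  obtain ⟨htli, ht0⟩ := ht
  have hli : LinearIndependent F fun i => a i + t • bb i := not_not.mp htli
  have hmem2 : ∀ i, a i + t • bb i ∈ LinearMap.range (g + t • h) := by
    intro i
    refine Fin.lastCases ?_ (fun i => ?_) i
    · refine ⟨t⁻¹ • v, ?_⟩
      simp only [ha, hbb, Fin.snoc_last, smul_zero, add_zero]
      simp only [LinearMap.add_apply, LinearMap.smul_apply, map_smul, hv, smul_zero, zero_add,
        smul_smul]
      rw [inv_mul_cancel₀ ht0, one_smul]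
    · refine ⟨u i, ?_⟩
      simp only [ha, hbb, Fin.snoc_castSucc, LinearMap.add_apply, LinearMap.smul_apply]
  have hle : Submodule.span F (Set.range fun i => a i + t • bb i)
      ≤ LinearMap.range (g + t • h) := by
    rw [Submodule.span_le]
    rintro x ⟨i, rfl⟩
    exact hmem2 i
  have hcard : finrank F (Submodule.span F (Set.range fun i => a i + t • bb i)) = Q + 1 := by
    rw [finrank_span_eq_card hli, Fintype.card_fin]
  have h1 := Submodule.finrank_mono hle
  rw [hcard] at h1
  have h2 := le_trans h1 (hrk t)
  omega

lemma finrank_map_add_finrank_inf_ker {F : Type} [Field F] {W : Type} [AddCommGroup W]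
    [Module F W] {V : Type} [AddCommGroup V] [Module F V]
    [FiniteDimensional F V] (f : V →ₗ[F] W) (S : Submodule F V) :
    finrank F (S.map f) + finrank F (S ⊓ LinearMap.ker f : Submodule F V) = finrank F S := by
  have h1 := LinearMap.finrank_range_add_finrank_ker (f.domRestrict S)
  rw [LinearMap.range_domRestrict, LinearMap.ker_domRestrict] at h1
  have h2 : Submodule.comap S.subtype (LinearMap.ker f)
      = Submodule.comap S.subtype (S ⊓ LinearMap.ker f) := by
    rw [Submodule.comap_inf, Submodule.comap_subtype_self, top_inf_eq]
  have h3 := LinearEquiv.finrank_eq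
    (Submodule.comapSubtypeEquivOfLe (inf_le_left : S ⊓ LinearMap.ker f ≤ S))
  rw [h2, h3] at h1
  exact h1

lemma finrank_finset_sup_le {F : Type} [Field F] {W : Type} [AddCommGroup W] [Module F W]
    {ι : Type} [DecidableEq ι] [FiniteDimensional F W]
    (s : Finset ι) (f : ι → Submodule F W) :
    finrank F ↥(s.sup f) ≤ ∑ i ∈ s, finrank F ↥(f i) := by
  induction s using Finset.induction_on with
  | empty => simp
  | @insert a s ha ih =>
    rw [Finset.sup_insert, Finset.sum_insert ha]
    have h1 := Submodule.finrank_sup_add_finrank_inf_eq (f a) (s.sup f)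
    omega

lemma arith_main (n m p d1 Q Kd : ℕ) (hp1 : 1 ≤ p) (hp2 : p * n ≤ m)
    (hQK : Q + Kd = p * n) (hd1K : d1 ≤ Kd) (hsemi : d1 * m ≤ n * Q) :
    (⌈(((m - (p - 1) * n) * n : ℕ) : ℚ) / (((n + m : ℕ)) : ℚ)⌉₊ : ℕ) + d1 ≤ n := by
  rcases Nat.eq_zero_or_pos n with hn | hn
  · subst hn
    have hd : d1 = 0 := by omega
    simp [hd]
  · have hmn : n ≤ m := le_trans (by nlinarith : n ≤ p * n) hp2
    have hm : 0 < m := lt_of_lt_of_le hn hmn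
    have hkey : d1 * (m + n) ≤ p * n * n := by
      nlinarith [Nat.mul_le_mul_right n hd1K, hsemi, hQK]
    have hd1n : d1 ≤ n := by
      have h1 : d1 * (m + n) ≤ n * (m + n) := by nlinarith
      exact Nat.le_of_mul_le_mul_right h1 (by omega)
    have hsub : (p - 1) * n ≤ m := le_trans (Nat.mul_le_mul_right n (Nat.sub_le p 1)) hp2
    have hceil : (⌈(((m - (p - 1) * n) * n : ℕ) : ℚ) / (((n + m : ℕ)) : ℚ)⌉₊ : ℕ) ≤ n - d1 := by
      rw [Nat.ceil_le]
      rw [div_le_iff₀ (by exact_mod_cast (by omega : (0:ℕ) < n + m))]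
      push_cast [Nat.cast_sub hsub, Nat.cast_sub hd1n, Nat.cast_sub hp1]
      have hkeyQ : (d1 : ℚ) * ((m : ℚ) + (n : ℚ)) ≤ (p : ℚ) * n * n := by exact_mod_cast hkey
      nlinarith [hkeyQ]
    omega

end AuxLemmas

/-- over an infinite field, a semistable tensor of shape `(n,m,k)` with `n ≤ m`
restricts to the matrix multiplication tensor `⟨1, ⌈(m−(p−1)n)·n/(n+m)⌉, p⟩` whenever
`1 ≤ p ≤ m/n`. -/
theorem statement8 (F : Type) [Field F] [Infinite F] (n m k : ℕ) (T : Tensor F n m k)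
    (hnm : n ≤ m) (hss : Semistable F (tensorRepMap T))
    (p : ℕ) (hp1 : 1 ≤ p) (hp2 : p * n ≤ m) :
    Restricts T
      (MMT (F := F) 1 (⌈(((m - (p - 1) * n) * n : ℕ) : ℚ) / (((n + m : ℕ)) : ℚ)⌉₊) p) := by
  classical
  set h0 : ℕ := ⌈(((m - (p - 1) * n) * n : ℕ) : ℚ) / (((n + m : ℕ)) : ℚ)⌉₊ with hh0def
  set f : Fin k → (Fin n → F) →ₗ[F] (Fin m → F) := tensorRepMap T with hfdef
  have hfapp : ∀ (j0 : Fin k) (x : Fin n → F) (j' : Fin m),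
      f j0 x j' = ∑ i' : Fin n, T i' j' j0 * x i' := by
    intro j0 x j'
    simp [hfdef, tensorRepMap, Matrix.mulVecLin_apply, Matrix.mulVec, dotProduct]
  set g : (Fin p → Fin k → F) → Fin p → ((Fin n → F) →ₗ[F] (Fin m → F)) :=
    fun c l => ∑ j : Fin k, c l j • f j with hgdef
  set Φ : (Fin p → Fin k → F) → ((Fin p → Fin n → F) →ₗ[F] (Fin m → F)) :=
    fun c => ∑ l : Fin p, (g c l).comp (LinearMap.proj l) with hΦdef
  have hΦapp : ∀ c x, Φ c x = ∑ l : Fin p, g c l (x l) := by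
    intro c x
    rw [hΦdef]
    simp [LinearMap.sum_apply, LinearMap.comp_apply, LinearMap.proj_apply]
  have hΦapp2 : ∀ c x, Φ c x = ∑ l : Fin p, ∑ j : Fin k, c l j • f j (x l) := by
    intro c x
    rw [hΦapp]
    refine Finset.sum_congr rfl fun l _ => ?_
    rw [hgdef]
    simp [LinearMap.sum_apply]
  -- maximal rank choice
  have hbdd : BddAbove (Set.range fun c : Fin p → Fin k → F =>
      finrank F ↥(LinearMap.range (Φ c))) := by
    refine ⟨m, ?_⟩
    rintro x ⟨c, rfl⟩
    calc finrank F ↥(LinearMap.range (Φ c)) ≤ finrank F (Fin m → F) := Submodule.finrank_le _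
    _ = m := Module.finrank_fin_fun F
  obtain ⟨cs, hcs⟩ := Nat.sSup_mem ⟨_, Set.mem_range_self (0 : Fin p → Fin k → F)⟩ hbdd
  have hmax : ∀ c, finrank F ↥(LinearMap.range (Φ c))
      ≤ finrank F ↥(LinearMap.range (Φ cs)) := fun c =>
    le_trans (le_csSup hbdd (Set.mem_range_self c)) (le_of_eq hcs.symm)
  -- Φ is affine in c
  have hΦaff : ∀ (t : F) (e : Fin p → Fin k → F), Φ (cs + t • e) = Φ cs + t • Φ e := by
    intro t e
    apply LinearMap.ext; intro x
    simp only [LinearMap.add_apply, LinearMap.smul_apply, hΦapp2]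
    have hterm : ∀ (l : Fin p) (j : Fin k), ((cs + t • e) l j) • f j (x l)
        = cs l j • f j (x l) + t • (e l j • f j (x l)) := by
      intro l j
      simp [Pi.add_apply, Pi.smul_apply, smul_eq_mul, add_smul, mul_smul]
    simp only [hterm, Finset.sum_add_distrib, Finset.smul_sum]
  -- pencil conclusion
  have hpencil : ∀ (l0 : Fin p) (j0 : Fin k) (v : Fin p → Fin n → F),
      v ∈ LinearMap.ker (Φ cs) → f j0 (v l0) ∈ LinearMap.range (Φ cs) := by
    intro l0 j0 v hv
    set e0 : Fin p → Fin k → F := fun l => if l = l0 then Pi.single j0 (1 : F) else 0 with he0def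
    have heΦ : Φ e0 = (f j0).comp (LinearMap.proj l0) := by
      rw [he0def]
      apply LinearMap.ext; intro x
      rw [hΦapp2]
      rw [Finset.sum_eq_single l0]
      · simp [Pi.single_apply, ite_smul, Finset.sum_ite_eq']
      · intro b _ hb
        simp [if_neg hb]
      · intro hl; exact absurd (Finset.mem_univ l0) hl
    refine pencil (Φ cs) ((f j0).comp (LinearMap.proj l0)) (fun t => ?_) (LinearMap.mem_ker.mp hv)
    have h2 : Φ cs + t • ((f j0).comp (LinearMap.proj l0)) = Φ (cs + t • e0) := by
      rw [hΦaff, heΦ]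
    rw [h2]
    exact hmax _
  -- the flag
  set K : Submodule F (Fin p → Fin n → F) := LinearMap.ker (Φ cs) with hKdef
  set Nn : ℕ → Submodule F (Fin p → Fin n → F) := fun ii =>
    ⨅ l : Fin p, ⨅ _ : (l : ℕ) < ii,
      LinearMap.ker (LinearMap.proj (R := F) (φ := fun _ : Fin p => Fin n → F) l) with hNndef
  have hNmem : ∀ ii (x : Fin p → Fin n → F), x ∈ Nn ii ↔ ∀ l : Fin p, (l : ℕ) < ii → x l = 0 := by
    intro ii x
    rw [hNndef]
    simp [Submodule.mem_iInf, LinearMap.mem_ker, LinearMap.proj_apply]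
  set Cc : ℕ → Submodule F (Fin p → Fin n → F) := fun ii => K ⊓ Nn ii with hCcdef
  have hC0 : Cc 0 = K := by
    rw [hCcdef]
    have hN0 : Nn 0 = ⊤ := by
      rw [eq_top_iff]; intro x _; exact (hNmem 0 x).mpr (fun l hl => absurd hl (by omega))
    simp [hN0]
  have hCK : ∀ ii, Cc ii ≤ K := by
    intro ii; rw [hCcdef]; exact inf_le_left
  have hCstep : ∀ ii (hii : ii < p), Cc (ii + 1) = Cc ii ⊓
      LinearMap.ker (LinearMap.proj (R := F) (φ := fun _ : Fin p => Fin n → F) ⟨ii, hii⟩) := by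
    intro ii hii
    have hN : Nn (ii+1) = Nn ii ⊓
        LinearMap.ker (LinearMap.proj (R := F) (φ := fun _ : Fin p => Fin n → F) ⟨ii, hii⟩) := by
      ext x
      simp only [Submodule.mem_inf, hNmem, LinearMap.mem_ker, LinearMap.proj_apply]
      constructor
      · intro hx
        exact ⟨fun l hl => hx l (by omega), hx ⟨ii, hii⟩ (by simp)⟩
      · rintro ⟨hx1, hx2⟩ l hl
        rcases Nat.lt_succ_iff_lt_or_eq.mp hl with hcase | hcase
        · exact hx1 l hcase
        · have : l = ⟨ii, hii⟩ := Fin.ext hcase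
          rw [this]; exact hx2
    show K ⊓ Nn (ii + 1) = K ⊓ Nn ii ⊓
      LinearMap.ker (LinearMap.proj (R := F) (φ := fun _ : Fin p => Fin n → F) ⟨ii, hii⟩)
    rw [hN, ← inf_assoc]
  have hCp : Cc p = ⊥ := by
    rw [eq_bot_iff]; intro x hx
    have h2 := (hNmem p x).mp ((Submodule.mem_inf.mp (by rw [hCcdef] at hx; exact hx)).2)
    have hx0 : x = 0 := funext fun l => h2 l l.2
    rw [Submodule.mem_bot]; exact hx0
  have hdimstep : ∀ ii (hii : ii < p),
      finrank F ↥(Submodule.map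
          (LinearMap.proj (R := F) (φ := fun _ : Fin p => Fin n → F) ⟨ii, hii⟩) (Cc ii))
        + finrank F ↥(Cc (ii+1)) = finrank F ↥(Cc ii) := by
    intro ii hii
    rw [hCstep ii hii]
    exact finrank_map_add_finrank_inf_ker _ (Cc ii)
  set sdim : ℕ → ℕ := fun ii => if hii : ii < p then
      finrank F ↥(Submodule.map
        (LinearMap.proj (R := F) (φ := fun _ : Fin p => Fin n → F) ⟨ii, hii⟩) (Cc ii)) else 0
    with hsdimdef
  have htel : ∀ jj, jj ≤ p →
      (∑ ii ∈ Finset.range jj, sdim ii) + finrank F ↥(Cc jj) ≤ finrank F ↥K := by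
    intro jj
    induction jj with
    | zero => intro _; rw [hC0]; simp
    | succ jjj ih =>
      intro hj
      have hjp : jjj < p := hj
      rw [Finset.sum_range_succ]
      have hs : sdim jjj = finrank F ↥(Submodule.map
          (LinearMap.proj (R := F) (φ := fun _ : Fin p => Fin n → F) ⟨jjj, hjp⟩) (Cc jjj)) := by
        rw [hsdimdef]; exact dif_pos hjp
      have hd := hdimstep jjj hjp
      have ihh := ih (le_of_lt hjp)
      omega
  set U1 : Submodule F (Fin n → F) := Finset.univ.sup (fun l : Fin p =>
      Submodule.map (LinearMap.proj (R := F) (φ := fun _ : Fin p => Fin n → F) l)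
        (Cc (l : ℕ))) with hU1def
  have hU1dim : finrank F ↥U1 ≤ finrank F ↥K := by
    have h1 := finrank_finset_sup_le (F := F) (Finset.univ : Finset (Fin p))
      (fun l => Submodule.map (LinearMap.proj (R := F) (φ := fun _ : Fin p => Fin n → F) l)
        (Cc (l : ℕ)))
    have h2 : ∑ l : Fin p, finrank F ↥(Submodule.map
          (LinearMap.proj (R := F) (φ := fun _ : Fin p => Fin n → F) l) (Cc (l : ℕ)))
        = ∑ ii ∈ Finset.range p, sdim ii := by
      calc ∑ l : Fin p, finrank F ↥(Submodule.map
            (LinearMap.proj (R := F) (φ := fun _ : Fin p => Fin n → F) l) (Cc (l : ℕ)))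
          = ∑ l : Fin p, sdim (l : ℕ) := by
            refine Finset.sum_congr rfl fun l _ => ?_
            simp only [hsdimdef]
            symm
            exact dif_pos l.2
      _ = ∑ ii ∈ Finset.range p, sdim ii := (Finset.sum_range _).symm
    have h3 := htel p (le_refl p)
    rw [hCp] at h3
    rw [hU1def]
    calc finrank F ↥(Finset.univ.sup fun l : Fin p =>
            Submodule.map (LinearMap.proj (R := F) (φ := fun _ : Fin p => Fin n → F) l)
              (Cc (l : ℕ)))
        ≤ ∑ l : Fin p, finrank F ↥(Submodule.map
            (LinearMap.proj (R := F) (φ := fun _ : Fin p => Fin n → F) l) (Cc (l : ℕ))) := h1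
    _ = ∑ ii ∈ Finset.range p, sdim ii := h2
    _ ≤ finrank F ↥K := by
        have hb : finrank F ↥(⊥ : Submodule F (Fin p → Fin n → F)) = 0 := finrank_bot F _
        omega
  have hU1maps : ∀ j0 : Fin k, Submodule.map (f j0) U1 ≤ LinearMap.range (Φ cs) := by
    intro j0
    rw [Submodule.map_le_iff_le_comap, hU1def]
    refine Finset.sup_le fun l _ => ?_
    intro x hx
    obtain ⟨v, hv, rfl⟩ := Submodule.mem_map.mp hx
    refine Submodule.mem_comap.mpr ?_
    exact hpencil l j0 v (hCK _ hv)
  have hsemi : finrank F ↥U1 * m ≤ n * finrank F ↥(LinearMap.range (Φ cs)) := by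
    by_cases hbot : U1 = ⊥
    · rw [hbot]
      simp [finrank_bot]
    · have h1 := hss U1 (LinearMap.range (Φ cs)) (fun l => hU1maps l)
        (fun hc => hbot hc.1)
      rwa [Module.finrank_fin_fun, Module.finrank_fin_fun] at h1
  have hQK : finrank F ↥(LinearMap.range (Φ cs)) + finrank F ↥K = p * n := by
    have h2 : finrank F (Fin p → Fin n → F) = p * n := by
      simp [Module.finrank_pi_fintype, Module.finrank_fin_fun, Finset.sum_const,
        Finset.card_fin, smul_eq_mul]
    have h1 := LinearMap.finrank_range_add_finrank_ker (Φ cs)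
    rw [h2] at h1
    exact h1
  have harith : h0 + finrank F ↥U1 ≤ n := by
    have := arith_main n m p (finrank F ↥U1) (finrank F ↥(LinearMap.range (Φ cs)))
      (finrank F ↥K) hp1 hp2 hQK hU1dim hsemi
    rw [hh0def]
    exact this
  -- complement and the subspace U
  obtain ⟨Wc, hWc⟩ := Submodule.exists_isCompl U1
  have hWcdim : finrank F ↥U1 + finrank F ↥Wc = n := by
    have h1 := Submodule.finrank_add_eq_of_isCompl hWc
    rwa [Module.finrank_fin_fun] at h1
  have hh0W : h0 ≤ finrank F ↥Wc := by omega
  set bW := Module.finBasis F ↥Wc with hbWdef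
  set u : Fin h0 → (Fin n → F) := fun i => ((bW (Fin.castLE hh0W i)) : Fin n → F) with hudef
  have huW : ∀ i, u i ∈ Wc := fun i => (bW (Fin.castLE hh0W i)).2
  have huLI : LinearIndependent F u := by
    have h1 : LinearIndependent F (fun i => ((bW i : Fin n → F))) :=
      bW.linearIndependent.map' Wc.subtype (Submodule.ker_subtype _)
    exact h1.comp (Fin.castLE hh0W) (Fin.castLE_injective hh0W)
  set w : Fin h0 × Fin p → (Fin m → F) := fun q => g cs q.2 (u q.1) with hwdef
  have hwapp : ∀ (i0 : Fin h0) (l1 : Fin p) (j' : Fin m),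
      w (i0, l1) j' = ∑ l' : Fin k, cs l1 l' * ∑ i' : Fin n, T i' j' l' * u i0 i' := by
    intro i0 l1 j'
    rw [hwdef]
    simp only [hgdef]
    simp [LinearMap.sum_apply, Finset.sum_apply, LinearMap.smul_apply, Pi.smul_apply,
      smul_eq_mul, hfapp]
  have hKdiag : ∀ x : Fin p → Fin n → F, x ∈ K → (∀ l, x l ∈ Wc) → x = 0 := by
    intro x hxK hxW
    by_contra hx0
    have hex : ∃ l, x l ≠ 0 := by
      by_contra hno; push_neg at hno; exact hx0 (funext hno)
    set s : Finset (Fin p) := Finset.univ.filter (fun l => x l ≠ 0) with hsdef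
    have hsne : s.Nonempty := by
      obtain ⟨l, hl⟩ := hex; exact ⟨l, by simp [hsdef, hl]⟩
    set l0 := s.min' hsne with hl0def
    have hl0 : x l0 ≠ 0 := (Finset.mem_filter.mp (s.min'_mem hsne)).2
    have hmin : ∀ l : Fin p, l < l0 → x l = 0 := by
      intro l hl
      by_contra hne
      have h1 : l ∈ s := Finset.mem_filter.mpr ⟨Finset.mem_univ l, hne⟩
      exact absurd hl (not_lt.mpr (s.min'_le l h1))
    have hxC : x ∈ Cc (l0 : ℕ) := by
      rw [hCcdef]
      refine Submodule.mem_inf.mpr ⟨hxK, (hNmem _ x).mpr ?_⟩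
      intro l hl
      exact hmin l (Fin.lt_def.mpr hl)
    have h1 : x l0 ∈ U1 := by
      have hmem : x l0 ∈ Submodule.map
          (LinearMap.proj (R := F) (φ := fun _ : Fin p => Fin n → F) l0) (Cc (l0 : ℕ)) :=
        Submodule.mem_map.mpr ⟨x, hxC, rfl⟩
      rw [hU1def]
      exact Finset.le_sup (f := fun l : Fin p =>
        Submodule.map (LinearMap.proj (R := F) (φ := fun _ : Fin p => Fin n → F) l)
          (Cc (l : ℕ))) (Finset.mem_univ l0) hmem
    have h2 : x l0 ∈ U1 ⊓ Wc := Submodule.mem_inf.mpr ⟨h1, hxW l0⟩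
    rw [hWc.inf_eq_bot] at h2
    exact hl0 (by simpa using h2)
  have hwLI : LinearIndependent F w := by
    rw [Fintype.linearIndependent_iff]
    intro cw hcw
    set x : Fin p → Fin n → F := fun l => ∑ i : Fin h0, cw (i, l) • u i with hxdef
    have hxK : x ∈ K := by
      have h1 : Φ cs x = ∑ q : Fin h0 × Fin p, cw q • w q := by
        calc Φ cs x = ∑ l : Fin p, g cs l (x l) := hΦapp cs x
        _ = ∑ l : Fin p, ∑ i : Fin h0, cw (i, l) • w (i, l) := by
            refine Finset.sum_congr rfl fun l _ => ?_
            have hxl : x l = ∑ i : Fin h0, cw (i, l) • u i := by rw [hxdef]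
            rw [hxl, map_sum]
            refine Finset.sum_congr rfl fun i _ => ?_
            rw [map_smul, hwdef]
        _ = ∑ q : Fin h0 × Fin p, cw q • w q := by
            rw [Fintype.sum_prod_type, Finset.sum_comm]
      rw [hKdef]
      exact LinearMap.mem_ker.mpr (by rw [h1, hcw])
    have hxW : ∀ l, x l ∈ Wc := by
      intro l
      have hxl : x l = ∑ i : Fin h0, cw (i, l) • u i := by rw [hxdef]
      rw [hxl]
      exact Submodule.sum_mem _ fun i _ => Submodule.smul_mem _ _ (huW i)
    have hx0 := hKdiag x hxK hxW
    intro q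
    obtain ⟨i0, l1⟩ := q
    have h2 : ∑ i : Fin h0, cw (i, l1) • u i = 0 := by
      have h3 := congrFun hx0 l1
      rw [hxdef] at h3
      simpa using h3
    exact Fintype.linearIndependent_iff.mp huLI (fun i => cw (i, l1)) h2 i0
  -- matrices
  set enc : Fin h0 × Fin p ≃ Fin (h0 * p) := finProdFinEquiv with hencdef
  set col : Fin (h0 * p) → (Fin m → F) := fun j => w (enc.symm j) with hcoldef
  have hcolLI : LinearIndependent F col := hwLI.comp enc.symm enc.symm.injective
  set M : Matrix (Fin m) (Fin (h0 * p)) F := Matrix.of (fun r j => col j r) with hMdef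
  have hMker : LinearMap.ker M.mulVecLin = ⊥ := by
    rw [LinearMap.ker_eq_bot']
    intro d hd
    have h1 : ∑ j, d j • col j = 0 := by
      funext r
      have h2 := congrFun hd r
      rw [hMdef] at h2
      simpa [Matrix.mulVecLin_apply, Matrix.mulVec, dotProduct, mul_comm,
        Finset.sum_apply, Pi.smul_apply, smul_eq_mul] using h2
    funext j
    exact Fintype.linearIndependent_iff.mp hcolLI d h1 j
  obtain ⟨gL, hgL⟩ := LinearMap.exists_leftInverse_of_injective _ hMker
  set B : Matrix (Fin (h0 * p)) (Fin m) F := LinearMap.toMatrix' gL with hBdef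
  have hBM : ∀ d, B.mulVec (M.mulVec d) = d := by
    intro d
    have h1 : B.mulVec (M.mulVec d) = gL (M.mulVecLin d) := by
      rw [show M.mulVec d = M.mulVecLin d from rfl]
      rw [show B.mulVec (M.mulVecLin d) = Matrix.toLin' B (M.mulVecLin d)
        from (Matrix.toLin'_apply _ _).symm]
      rw [hBdef, Matrix.toLin'_toMatrix']
    rw [h1, ← LinearMap.comp_apply, hgL, LinearMap.id_apply]
  -- final assembly
  refine ⟨Matrix.of (fun i i' => u ((finProdFinEquiv.symm i : Fin 1 × Fin h0).2) i'), B,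
    Matrix.of (fun l j0 => cs ((finProdFinEquiv.symm l : Fin p × Fin 1).1) j0), ?_⟩
  intro i j l
  set i2 : Fin h0 := (finProdFinEquiv.symm i : Fin 1 × Fin h0).2 with hi2
  set l1 : Fin p := (finProdFinEquiv.symm l : Fin p × Fin 1).1 with hl1
  set j0 : Fin (h0 * p) := enc (i2, l1) with hj0
  have hRHS : (∑ i' : Fin n, ∑ j' : Fin m, ∑ l' : Fin k,
      (Matrix.of (fun i i' => u ((finProdFinEquiv.symm i : Fin 1 × Fin h0).2) i')) i i' * B j j' *
      (Matrix.of (fun l j0 => cs ((finProdFinEquiv.symm l : Fin p × Fin 1).1) j0)) l l' * T i' j' l')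
      = ∑ j' : Fin m, B j j' * w (i2, l1) j' := by
    rw [Finset.sum_comm]
    refine Finset.sum_congr rfl fun j' _ => ?_
    rw [hwapp i2 l1 j', Finset.mul_sum]
    rw [Finset.sum_comm]
    refine Finset.sum_congr rfl fun l' _ => ?_
    rw [Finset.mul_sum, Finset.mul_sum]
    refine Finset.sum_congr rfl fun i' _ => ?_
    simp only [Matrix.of_apply, ← hi2, ← hl1]
    ring
  have hcol : w (i2, l1) = M.mulVec (Pi.single j0 1) := by
    funext r
    rw [Matrix.mulVec_single]
    rw [hMdef]
    simp only [Pi.smul_apply, Matrix.col, Matrix.transpose_apply, Matrix.of_apply, MulOpposite.op_one, one_smul]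
    rw [hcoldef]
    simp only [hj0, Equiv.symm_apply_apply]
  have hBcol : ∑ j' : Fin m, B j j' * w (i2, l1) j' = (Pi.single j0 (1:F) : Fin (h0 * p) → F) j := by
    have h1 : ∑ j' : Fin m, B j j' * w (i2, l1) j' = (B.mulVec (w (i2, l1))) j := by
      simp [Matrix.mulVec, dotProduct]
    rw [h1, hcol, hBM]
  have hcond : (((finProdFinEquiv.symm i : Fin 1 × Fin h0).2
        = (finProdFinEquiv.symm j : Fin h0 × Fin p).1)
      ∧ ((finProdFinEquiv.symm j : Fin h0 × Fin p).2
        = (finProdFinEquiv.symm l : Fin p × Fin 1).1)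
      ∧ ((finProdFinEquiv.symm l : Fin p × Fin 1).2
        = (finProdFinEquiv.symm i : Fin 1 × Fin h0).1))
      ↔ j = j0 := by
    constructor
    · rintro ⟨hc1, hc2, _⟩
      rw [hj0, hencdef]
      have hpair : (i2, l1) = finProdFinEquiv.symm j := by
        refine Prod.ext ?_ ?_
        · rw [hi2]; exact hc1
        · rw [hl1]; exact hc2.symm
      rw [hpair, Equiv.apply_symm_apply]
    · intro hj
      refine ⟨?_, ?_, Subsingleton.elim _ _⟩
      · rw [hj, hj0, hencdef, Equiv.symm_apply_apply]
      · rw [hj, hj0, hencdef, Equiv.symm_apply_apply]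
  show (if (((finProdFinEquiv.symm i : Fin 1 × Fin h0).2
        = (finProdFinEquiv.symm j : Fin h0 × Fin p).1)
      ∧ ((finProdFinEquiv.symm j : Fin h0 × Fin p).2
        = (finProdFinEquiv.symm l : Fin p × Fin 1).1)
      ∧ ((finProdFinEquiv.symm l : Fin p × Fin 1).2
        = (finProdFinEquiv.symm i : Fin 1 × Fin h0).1)) then (1:F) else 0) = _
  rw [if_congr hcond rfl rfl]
  rw [hRHS, hBcol]
  rw [Pi.single_apply]


end Paper
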